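/- Let V be a regular bounded operator on a Hilbert space H with Moore–Penrose inverse V†. Then for every n ∈ ℕ, ker((V†)ⁿ) ∩ range(Vⁿ) = {0}, and range(Vⁿ) = { h ∈ H : Vⁿ(V†)ⁿ h = h }. -/

import Mathlib

open ContinuousLinearMap

/-- The four Penrose equations: `Vd` is the Moore–Penrose inverse of `V`. -/
def IsMoorePenrose {H : Type*} [NormedAddCommGroup H] [InnerProductSpace ℂ H]
    [CompleteSpace H] (V Vd : H →L[ℂ] H) : Prop :=
  V ∘L Vd ∘L V = V ∧ Vd ∘L V ∘L Vd = Vd ∧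
    adjoint (V ∘L Vd) = V ∘L Vd ∧ adjoint (Vd ∘L V) = Vd ∘L V

variable {H : Type*} [NormedAddCommGroup H] [InnerProductSpace ℂ H] [CompleteSpace H]

/-- For regular V: ker((V†)ⁿ) ∩ range(Vⁿ) = {0} and
range(Vⁿ) = { h : Vⁿ(V†)ⁿ h = h }. -/
theorem stmt12 (V Vd : H →L[ℂ] H)
    (hcl : IsClosed (LinearMap.range (V : H →ₗ[ℂ] H) : Set H))
    (hreg : ∀ n : ℕ, LinearMap.ker (V : H →ₗ[ℂ] H) ≤ LinearMap.range ((V ^ n : H →L[ℂ] H) : H →ₗ[ℂ] H))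
    (hVd : IsMoorePenrose V Vd) :
    ∀ n : ℕ,
      LinearMap.ker ((Vd ^ n : H →L[ℂ] H) : H →ₗ[ℂ] H) ⊓ LinearMap.range ((V ^ n : H →L[ℂ] H) : H →ₗ[ℂ] H) = ⊥ ∧
      (∀ h : H, h ∈ LinearMap.range ((V ^ n : H →L[ℂ] H) : H →ₗ[ℂ] H) ↔ (V ^ n) ((Vd ^ n) h) = h) := by
  obtain ⟨h1, h2, h3, h4⟩ := hVd
  have hP1 : ∀ z : H, V (Vd (V z)) = V z := by
    intro z
    have := congrFun (congrArg (DFunLike.coe) h1) z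
    simpa using this
  have key : ∀ n : ℕ, ∀ x : H, (V ^ n) ((Vd ^ n) ((V ^ n) x)) = (V ^ n) x := by
    intro n
    induction n with
    | zero => intro x; simp
    | succ n ih =>
      intro x
      have hk : V ((V ^ n) x - Vd (V ((V ^ n) x))) = 0 := by
        rw [map_sub, hP1, sub_self]
      obtain ⟨z, hz⟩ := hreg n (LinearMap.mem_ker.mpr hk)
      have e1 : ∀ u : H, (V ^ (n + 1)) u = V ((V ^ n) u) := by
        intro u; rw [pow_succ', ContinuousLinearMap.mul_apply]
      have e2 : ∀ u : H, (Vd ^ (n + 1)) u = (Vd ^ n) (Vd u) := by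
        intro u; rw [pow_succ, ContinuousLinearMap.mul_apply]
      have hVdVy : Vd (V ((V ^ n) x)) = (V ^ n) x - (V ^ n) z := by
        rw [show (V ^ n) z = ((V ^ n : H →L[ℂ] H) : H →ₗ[ℂ] H) z from rfl, hz]; abel
      have step : (V ^ n) ((Vd ^ n) (Vd (V ((V ^ n) x)))) = Vd (V ((V ^ n) x)) := by
        rw [hVdVy, map_sub, map_sub, ih x, ih z]
      rw [e1 x, e2, e1, step, hP1]
  intro n
  constructor
  · rw [eq_bot_iff]
    intro h hh
    have hker := (Submodule.mem_inf.mp hh).1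
    have hrange := (Submodule.mem_inf.mp hh).2
    obtain ⟨x, hx⟩ := hrange
    have hfix : (V ^ n) ((Vd ^ n) h) = h := by
      rw [← hx]; exact key n x
    have h0 : (Vd ^ n) h = 0 := LinearMap.mem_ker.mp hker
    rw [Submodule.mem_bot, ← hfix, h0, map_zero]
  · intro h
    constructor
    · rintro ⟨x, hx⟩
      rw [← hx]; exact key n x
    · intro hfix
      exact ⟨(Vd ^ n) h, hfix⟩
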